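/- Let A, C > 0, B ≥ 0 with B² ≤ AC, and define G₂(x) = A⁵x³ + 3A⁴Cx² + 3A³C²x − 12A²B²Cx + A²C³ − 12AB²C² + 16B⁴C. Then for all x ≥ 0 with Ax/C ≥ 2√3 − 1, G₂(x) ≥ 0. -/
import Mathlib


/-- Polynomial inequality from Appendix C: for `A, C > 0`, `B ≥ 0` with
`B² ≤ A C`, the polynomial `G₂` is nonnegative whenever `A x / C ≥ 2√3 − 1`. -/
theorem stmt_12 (A B C : ℝ) (hA : 0 < A) (hC : 0 < C) (hB : 0 ≤ B)
    (hBAC : B ^ 2 ≤ A * C) (x : ℝ) (hx : 0 ≤ x)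
    (hk : 2 * Real.sqrt 3 - 1 ≤ A * x / C) :
    0 ≤ A ^ 5 * x ^ 3 + 3 * A ^ 4 * C * x ^ 2 + 3 * A ^ 3 * C ^ 2 * x
        - 12 * A ^ 2 * B ^ 2 * C * x + A ^ 2 * C ^ 3
        - 12 * A * B ^ 2 * C ^ 2 + 16 * B ^ 4 * C := by
  have hs : Real.sqrt 3 ^ 2 = 3 := Real.sq_sqrt (by norm_num)
  have hs0 : 0 ≤ Real.sqrt 3 := Real.sqrt_nonneg 3
  have hs98 : (9:ℝ)/8 ≤ Real.sqrt 3 := by nlinarith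
  have hu : (2 * Real.sqrt 3 - 1) * C ≤ A * x := by
    have := (le_div_iff₀ hC).mp hk
    linarith
  -- u = A*x + C; 16*G₂ = C*(8B² - 3Au)² + 4A²u²(4u - 9C)
  have h1 : 0 ≤ 4 * (A * x + C) - 9 * C := by nlinarith
  have h2 : 0 ≤ (A * x + C) ^ 2 * (4 * (A * x + C) - 9 * C) := by positivity
  nlinarith [sq_nonneg (8 * B ^ 2 - 3 * A * (A * x + C)), mul_nonneg hC.le (sq_nonneg (8 * B ^ 2 - 3 * A * (A * x + C))), mul_nonneg (mul_nonneg (sq_nonneg A) (by norm_num : (0:ℝ) ≤ 4)) h2]
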